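/- Let n ≥ 1 and let ζ = exp(2πi/n). For each k ≥ 0 let d_k be the complex dimension of the space of homogeneous polynomials P(x,y) of degree k in ℂ[x,y] satisfying P(ζx, ζ⁻¹y) = P(x,y). Then in ℂ⟦u⟧ one has (Σ_{k≥0} d_k u^k) · (1−u²)(1−u^n) = 1 + u^n. -/

import Mathlib

open MvPolynomial

/-- The substitution `P(x,y) ↦ P(ax+by, cx+dy)` on `ℂ[x,y]`, for `g = [[a,b],[c,d]]`. -/
noncomputable def binarySubst (a b c d : ℂ) :
    MvPolynomial (Fin 2) ℂ →ₐ[ℂ] MvPolynomial (Fin 2) ℂ :=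
  aeval ![C a * X 0 + C b * X 1, C c * X 0 + C d * X 1]

namespace InvDimAux

/-- exponent set -/
def dset (n k : ℕ) : Finset ℕ := (Finset.range (k+1)).filter (fun i => 2*i % n = k % n)

lemma binarySubst_monomial (a d : ℂ) (σ : Fin 2 →₀ ℕ) (c : ℂ) :
    binarySubst a 0 0 d (monomial σ c) = monomial σ (c * a ^ σ 0 * d ^ σ 1) := by
  rw [binarySubst, aeval_monomial, monomial_eq,
    Finsupp.prod_fintype _ _ (fun i => pow_zero _),
    Finsupp.prod_fintype _ _ (fun i => pow_zero _), Fin.prod_univ_two, Fin.prod_univ_two]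
  simp only [Matrix.cons_val_zero, Matrix.cons_val_one, Matrix.head_cons, C_0,
    zero_mul, add_zero, zero_add, algebraMap_eq, map_mul, map_pow, mul_pow]
  ring

lemma coeff_binarySubst (a d : ℂ) (P : MvPolynomial (Fin 2) ℂ) (σ : Fin 2 →₀ ℕ) :
    coeff σ (binarySubst a 0 0 d P) = a ^ σ 0 * d ^ σ 1 * coeff σ P := by
  conv_lhs => rw [P.as_sum, map_sum]
  rw [coeff_sum]
  simp_rw [binarySubst_monomial, coeff_monomial]
  rw [Finset.sum_ite_eq' P.support σ (fun τ => coeff τ P * a ^ τ 0 * d ^ τ 1)]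
  by_cases h : σ ∈ P.support
  · simp only [h, if_true]; ring
  · rw [if_neg h, notMem_support_iff.mp h, mul_zero]

lemma fin2_degree (σ : Fin 2 →₀ ℕ) : σ.degree = σ 0 + σ 1 := by
  rw [Finsupp.degree, ← Fin.sum_univ_two (fun i => σ i)]
  exact Finset.sum_subset (Finset.subset_univ _)
    (fun i _ h => Finsupp.notMem_support_iff.mp h)

lemma fin2_eq (σ : Fin 2 →₀ ℕ) : Finsupp.single 0 (σ 0) + Finsupp.single 1 (σ 1) = σ := by
  ext j
  fin_cases j <;> simp [Finsupp.single_apply]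

lemma single_apply₀ (i j : ℕ) :
    (Finsupp.single (0 : Fin 2) i + Finsupp.single (1 : Fin 2) j) 0 = i := by
  simp [Finsupp.single_apply]

lemma single_apply₁ (i j : ℕ) :
    (Finsupp.single (0 : Fin 2) i + Finsupp.single (1 : Fin 2) j) 1 = j := by
  simp [Finsupp.single_apply]

section zeta

variable {n : ℕ} (hn : 1 ≤ n)
local notation "ζ" => Complex.exp (2 * Real.pi * Complex.I / n)

include hn

lemma hzeta : IsPrimitiveRoot ζ n := Complex.isPrimitiveRoot_exp n (by omega)

lemma zeta_pow_mod (a : ℕ) : ζ ^ a = ζ ^ (a % n) := by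
  conv_lhs => rw [← Nat.mod_add_div a n]
  rw [pow_add, pow_mul, (hzeta hn).pow_eq_one, one_pow, mul_one]

lemma zeta_pow_eq_of_mod (a b : ℕ) (h : a % n = b % n) : ζ ^ a = ζ ^ b := by
  rw [zeta_pow_mod hn a, zeta_pow_mod hn b, h]

lemma mod_eq_of_zeta_pow (a b : ℕ) (h : ζ ^ a = ζ ^ b) : a % n = b % n := by
  rw [zeta_pow_mod hn a, zeta_pow_mod hn b] at h
  exact (hzeta hn).pow_inj (Nat.mod_lt _ (by omega)) (Nat.mod_lt _ (by omega)) h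

/-- The key dimension computation. -/
lemma finrank_inv (k : ℕ) :
    Module.finrank ℂ
      ↥(homogeneousSubmodule (Fin 2) ℂ k ⊓
        LinearMap.ker ((binarySubst ζ 0 0 (ζ)⁻¹).toLinearMap - LinearMap.id)) =
    (dset n k).card := by
  have hζ0 : (ζ : ℂ) ≠ 0 := Complex.exp_ne_zero _
  set emb : ℕ → (Fin 2 →₀ ℕ) := fun i => Finsupp.single 0 i + Finsupp.single 1 (k - i) with hemb
  set mono : Finset (MvPolynomial (Fin 2) ℂ) :=
    (dset n k).image (fun i => monomial (emb i) 1) with hmono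
  have hspan : (homogeneousSubmodule (Fin 2) ℂ k ⊓
        LinearMap.ker ((binarySubst ζ 0 0 (ζ)⁻¹).toLinearMap - LinearMap.id)) =
      Submodule.span ℂ (mono : Set (MvPolynomial (Fin 2) ℂ)) := by
    apply le_antisymm
    · intro p hp
      rw [Submodule.mem_inf] at hp
      obtain ⟨hp1, hp2⟩ := hp
      rw [LinearMap.mem_ker, LinearMap.sub_apply, LinearMap.id_apply, sub_eq_zero,
        AlgHom.toLinearMap_apply] at hp2
      rw [mem_homogeneousSubmodule] at hp1
      suffices h : (∑ σ ∈ p.support, monomial σ (coeff σ p)) ∈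
          Submodule.span ℂ (mono : Set (MvPolynomial (Fin 2) ℂ)) by
        rwa [← p.as_sum] at h
      apply Submodule.sum_mem
      intro σ hσ
      have hd : σ 0 + σ 1 = k := by
        rw [← fin2_degree, Finsupp.degree_eq_weight_one]
        exact hp1 (mem_support_iff.mp hσ)
      have hinv : ζ ^ σ 0 * (ζ)⁻¹ ^ σ 1 * coeff σ p = coeff σ p := by
        conv_rhs => rw [← hp2]
        rw [coeff_binarySubst]
      have hc : ζ ^ σ 0 * (ζ)⁻¹ ^ σ 1 = 1 := by
        have hc0 := mem_support_iff.mp hσ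
        have h5 : ζ ^ σ 0 * (ζ)⁻¹ ^ σ 1 * coeff σ p = 1 * coeff σ p := by
          rw [one_mul]; exact hinv
        exact mul_right_cancel₀ hc0 h5
      have hpow : ζ ^ σ 0 = ζ ^ σ 1 := by
        rw [inv_pow] at hc
        exact (mul_inv_eq_one₀ (pow_ne_zero _ hζ0)).mp hc
      have hmod : σ 0 % n = σ 1 % n := mod_eq_of_zeta_pow hn _ _ hpow
      have hmem : σ 0 ∈ dset n k := by
        rw [dset, Finset.mem_filter, Finset.mem_range]
        constructor
        · omega
        · have h4 : σ 0 + σ 0 ≡ σ 0 + σ 1 [MOD n] := Nat.ModEq.add_left _ hmod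
          calc 2 * σ 0 % n = (σ 0 + σ 0) % n := by rw [two_mul]
            _ = (σ 0 + σ 1) % n := h4
            _ = k % n := by rw [hd]
      have : monomial σ (coeff σ p) = (coeff σ p) • monomial σ 1 := by
        rw [smul_monomial, smul_eq_mul, mul_one]
      rw [this]
      apply Submodule.smul_mem
      apply Submodule.subset_span
      rw [hmono]
      simp only [Finset.coe_image, Set.mem_image, Finset.mem_coe]
      have h6 : emb (σ 0) = σ := by
        have h7 : k - σ 0 = σ 1 := by omega
        show Finsupp.single 0 (σ 0) + Finsupp.single 1 (k - σ 0) = σ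
        rw [h7, fin2_eq]
      exact ⟨σ 0, hmem, by rw [h6]⟩
    · rw [Submodule.span_le]
      intro p hp
      simp only [hmono, Finset.coe_image, Set.mem_image, Finset.mem_coe] at hp
      obtain ⟨i, hi, rfl⟩ := hp
      rw [dset, Finset.mem_filter, Finset.mem_range] at hi
      obtain ⟨hik, hmod⟩ := hi
      rw [SetLike.mem_coe, Submodule.mem_inf]
      constructor
      · rw [mem_homogeneousSubmodule]
        apply isHomogeneous_monomial
        rw [fin2_degree, hemb, single_apply₀, single_apply₁]
        omega
      · rw [LinearMap.mem_ker, LinearMap.sub_apply, LinearMap.id_apply, sub_eq_zero,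
          AlgHom.toLinearMap_apply, binarySubst_monomial, single_apply₀, single_apply₁]
        congr 1
        have h1 : i % n = (k - i) % n := by
          have h2 : i + i ≡ i + (k - i) [MOD n] := by
            have h3 : i + (k - i) = k := by omega
            rw [h3, ← two_mul]; exact hmod
          exact Nat.ModEq.add_left_cancel' i h2
        have : ζ ^ i = ζ ^ (k - i) := zeta_pow_eq_of_mod hn _ _ h1
        rw [one_mul, inv_pow, this, mul_inv_cancel₀ (pow_ne_zero _ hζ0)]
  have hinj : Function.Injective (fun i => monomial (emb i) (1 : ℂ)) := by
    intro a b hab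
    have h2 := monomial_left_injective (R := ℂ) one_ne_zero hab
    have h3 := congrArg (fun f => f 0) h2
    simpa [hemb, single_apply₀] using h3
  have hli : LinearIndependent ℂ ((↑) : mono → MvPolynomial (Fin 2) ℂ) := by
    have hbase : LinearIndepOn ℂ id (Set.range (basisMonomials (Fin 2) ℂ)) :=
      (basisMonomials (Fin 2) ℂ).linearIndependent.linearIndepOn_id
    clear_value mono emb
    have h2 : LinearIndepOn ℂ id (mono : Set (MvPolynomial (Fin 2) ℂ)) := hbase.mono ?_
    · exact h2
    intro q hq
    have hq2 : q ∈ mono := hq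
    rw [hmono, Finset.mem_image] at hq2
    obtain ⟨i, -, hpe⟩ := hq2
    exact ⟨emb i, by rw [coe_basisMonomials]; exact hpe⟩
  rw [hspan, finrank_span_finset_eq_card hli, hmono, Finset.card_image_of_injective _ hinj]

end zeta

lemma dcard_zero (n : ℕ) : (dset n 0).card = 1 := by
  rw [dset, Finset.range_one, Finset.filter_singleton, if_pos (by rw [mul_zero])]
  rfl

lemma dcard_one (n : ℕ) (hn : 1 ≤ n) :
    (dset n 1).card = if n ∣ 1 then 2 else 0 := by
  have hr : Finset.range 2 = {0, 1} := by decide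
  rw [dset, hr, Finset.filter_insert, Finset.filter_singleton]
  have h0 : ((2 * 0) % n = 1 % n) ↔ n ∣ 1 := by
    rw [mul_zero]
    exact (Nat.modEq_iff_dvd' (Nat.zero_le 1)).trans (by rw [Nat.sub_zero])
  have h1 : ((2 * 1) % n = 1 % n) ↔ n ∣ 1 := by
    constructor
    · intro h
      have h2 : (1 : ℕ) ≡ 2 * 1 [MOD n] := h.symm
      have := (Nat.modEq_iff_dvd' (by norm_num : (1:ℕ) ≤ 2 * 1)).mp h2
      simpa using this
    · intro h
      have h2 : (1 : ℕ) ≡ 2 * 1 [MOD n] :=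
        (Nat.modEq_iff_dvd' (by norm_num : (1:ℕ) ≤ 2 * 1)).mpr (by simpa using h)
      exact h2.symm
  by_cases hd : n ∣ 1
  · rw [if_pos (h0.mpr hd), if_pos (h1.mpr hd), if_pos hd]
    rfl
  · rw [if_neg (fun h => hd (h0.mp h)), if_neg (fun h => hd (h1.mp h)), if_neg hd,
      Finset.card_empty]

lemma dcard_step (n m : ℕ) :
    (dset n (m+2)).card = (dset n m).card + (if n ∣ (m+2) then 2 else 0) := by
  classical
  set c : ℕ → Prop := fun i => 2 * i % n = (m+2) % n with hc
  have hc0 : c 0 ↔ n ∣ (m+2) := by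
    rw [hc]
    show (2 * 0) % n = (m+2) % n ↔ n ∣ (m+2)
    rw [mul_zero]
    constructor
    · intro h
      have := (Nat.modEq_iff_dvd' (Nat.zero_le (m+2))).mp h
      simpa using this
    · intro h
      exact (Nat.modEq_iff_dvd' (Nat.zero_le (m+2))).mpr (by simpa using h)
  have hctop : c (m+2) ↔ n ∣ (m+2) := by
    rw [hc]
    show (2 * (m+2)) % n = (m+2) % n ↔ n ∣ (m+2)
    constructor
    · intro h
      have h2 : (m+2 : ℕ) ≡ 2 * (m+2) [MOD n] := h.symm
      have := (Nat.modEq_iff_dvd' (by omega : m+2 ≤ 2 * (m+2))).mp h2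
      have h3 : 2 * (m+2) - (m+2) = m+2 := by omega
      rwa [h3] at this
    · intro h
      have h3 : 2 * (m+2) - (m+2) = m+2 := by omega
      exact ((Nat.modEq_iff_dvd' (by omega : m+2 ≤ 2 * (m+2))).mpr (by rwa [h3])).symm
  have hshift : ∀ i, c (i+1) ↔ 2 * i % n = m % n := by
    intro i
    rw [hc]
    show (2 * (i+1)) % n = (m+2) % n ↔ 2 * i % n = m % n
    have h4 : 2 * (i+1) = 2*i + 2 := by ring
    rw [h4]
    exact ⟨fun h => Nat.ModEq.add_right_cancel' 2 h, fun h => Nat.ModEq.add_right 2 h⟩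
  have hr : Finset.range (m+3) =
      insert (m+2) (insert 0 ((Finset.range (m+1)).image Nat.succ)) := by
    ext j
    simp only [Finset.mem_range, Finset.mem_insert, Finset.mem_image]
    constructor
    · intro hj
      rcases Nat.eq_or_lt_of_le (Nat.lt_succ_iff.mp hj) with h | h
      · exact Or.inl h
      · rcases Nat.eq_zero_or_pos j with h0 | h0
        · exact Or.inr (Or.inl h0)
        · exact Or.inr (Or.inr ⟨j - 1, by omega, by omega⟩)
    · rintro (rfl | rfl | ⟨i, hi, rfl⟩) <;> omega
  set S : Finset ℕ := ((Finset.range (m+1)).image Nat.succ).filter c with hSdef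
  have hScard : S.card = (dset n m).card := by
    rw [hSdef, Finset.filter_image,
      Finset.card_image_of_injective _ Nat.succ_injective, dset]
    congr 1
    apply Finset.filter_congr
    intro i _
    simpa using hshift i
  have h0S : (0 : ℕ) ∉ S := by
    rw [hSdef]
    intro h
    obtain ⟨i, -, hi⟩ := Finset.mem_image.mp (Finset.mem_of_mem_filter _ h)
    exact Nat.succ_ne_zero i hi
  have htop0 : (m+2 : ℕ) ∉ insert 0 S := by
    intro h
    rcases Finset.mem_insert.mp h with h | h
    · omega
    · rw [hSdef] at h
      obtain ⟨i, hi, hie⟩ := Finset.mem_image.mp (Finset.mem_of_mem_filter _ h)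
      rw [Finset.mem_range] at hi
      omega
  have key : dset n (m+2) = (Finset.range (m+3)).filter c := rfl
  rw [key, hr, Finset.filter_insert, Finset.filter_insert]
  by_cases hdvd : n ∣ (m+2)
  · rw [if_pos (hctop.mpr hdvd), if_pos (hc0.mpr hdvd), if_pos hdvd]
    rw [Finset.card_insert_of_notMem htop0, Finset.card_insert_of_notMem h0S, hScard]
  · rw [if_neg (fun h => hdvd (hctop.mp h)), if_neg (fun h => hdvd (hc0.mp h)), if_neg hdvd,
      hScard, add_zero]

lemma series_main (n : ℕ) (hn : 1 ≤ n) (d : ℕ → ℂ)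
    (h0 : d 0 = 1) (h1 : d 1 = if n ∣ 1 then 2 else 0)
    (hstep : ∀ m, d (m+2) = d m + (if n ∣ (m+2) then 2 else 0)) :
    (PowerSeries.mk d) * ((1 - PowerSeries.X ^ 2) * (1 - PowerSeries.X ^ n)) =
      1 + PowerSeries.X ^ n := by
  classical
  set F : PowerSeries ℂ :=
    PowerSeries.mk (fun m => if m = 0 then 1 else if n ∣ m then 2 else 0) with hF
  have stepA : (PowerSeries.mk d) * (1 - PowerSeries.X ^ 2) = F := by
    ext m
    rw [mul_sub, mul_one, map_sub, PowerSeries.coeff_mul_X_pow', hF]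
    simp only [PowerSeries.coeff_mk]
    match m with
    | 0 => simp [h0]
    | 1 => simp [h1]
    | (m+2) =>
      rw [if_pos (by omega : 2 ≤ m + 2)]
      have h2 : m + 2 - 2 = m := by omega
      rw [h2, hstep m, if_neg (by omega : ¬ (m + 2 = 0))]
      ring
  have stepB : F * (1 - PowerSeries.X ^ n) = 1 + PowerSeries.X ^ n := by
    ext m
    rw [mul_sub, mul_one, map_sub, PowerSeries.coeff_mul_X_pow', map_add,
      PowerSeries.coeff_one, PowerSeries.coeff_X_pow, hF]
    simp only [PowerSeries.coeff_mk]
    rcases Nat.eq_zero_or_pos m with rfl | hm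
    · rw [if_pos rfl, if_neg (by omega : ¬ n ≤ 0), if_pos rfl, if_neg (by omega : ¬ (0 = n)),
        sub_zero, add_zero]
    · rw [if_neg (by omega : ¬ m = 0)]
      by_cases hnm : n ≤ m
      · rw [if_pos hnm]
        rcases eq_or_lt_of_le hnm with h | h
        · rw [if_pos (by omega : m - n = 0), if_pos h.symm,
            if_pos (show n ∣ m from h ▸ dvd_refl n), if_neg (by omega : ¬ m = 0)]
          norm_num
        · rw [if_neg (by omega : ¬ m - n = 0), if_neg (by omega : ¬ m = n)]
          have hiff : n ∣ m ↔ n ∣ (m - n) := by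
            constructor
            · intro hd; exact Nat.dvd_sub hd dvd_rfl
            · intro hd
              have h5 := Nat.dvd_add hd (dvd_refl n)
              rwa [Nat.sub_add_cancel hnm] at h5
          by_cases hd : n ∣ m
          · rw [if_pos hd, if_pos (hiff.mp hd), if_neg (by omega : ¬ m = 0), add_zero, sub_self]
          · rw [if_neg hd, if_neg (fun h => hd (hiff.mpr h)), if_neg (by omega : ¬ m = 0),
              add_zero, sub_zero]
      · rw [if_neg hnm, if_neg (by omega : ¬ m = n),
          if_neg (fun h => hnm (Nat.le_of_dvd hm h)), if_neg (by omega : ¬ m = 0),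
          add_zero, sub_zero]
  rw [← mul_assoc, stepA, stepB]

end InvDimAux

/-- For `n ≥ 1` and `ζ = exp(2πi/n)`, letting `d_k` be the dimension of the space of
homogeneous polynomials `P(x,y)` of degree `k` with `P(ζx, ζ⁻¹y) = P(x,y)`, one has
`(Σ_k d_k u^k)(1−u²)(1−uⁿ) = 1 + uⁿ` in `ℂ⟦u⟧`. -/
theorem invariant_dimension_powerSeries (n : ℕ) (hn : 1 ≤ n) :
    letI ζ : ℂ := Complex.exp (2 * Real.pi * Complex.I / n)
    (PowerSeries.mk fun k =>
        ((Module.finrank ℂ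
          ↥(homogeneousSubmodule (Fin 2) ℂ k ⊓
            LinearMap.ker ((binarySubst ζ 0 0 ζ⁻¹).toLinearMap - LinearMap.id)) : ℕ) : ℂ)) *
      ((1 - PowerSeries.X ^ 2) * (1 - PowerSeries.X ^ n)) =
    1 + PowerSeries.X ^ n := by
  have key : (PowerSeries.mk fun k => (((InvDimAux.dset n k).card : ℕ) : ℂ)) *
      ((1 - PowerSeries.X ^ 2) * (1 - PowerSeries.X ^ n)) = 1 + PowerSeries.X ^ n := by
    apply InvDimAux.series_main n hn
    · rw [InvDimAux.dcard_zero]; norm_num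
    · rw [InvDimAux.dcard_one n hn]; split_ifs <;> norm_num
    · intro m
      rw [InvDimAux.dcard_step n m]
      push_cast [apply_ite (Nat.cast : ℕ → ℂ)]
      ring
  have hfun : (fun k => (((InvDimAux.dset n k).card : ℕ) : ℂ)) =
      (fun k => ((Module.finrank ℂ
        ↥(homogeneousSubmodule (Fin 2) ℂ k ⊓
          LinearMap.ker ((binarySubst (Complex.exp (2 * Real.pi * Complex.I / n)) 0 0
            (Complex.exp (2 * Real.pi * Complex.I / n))⁻¹).toLinearMap -
              LinearMap.id)) : ℕ) : ℂ)) := by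
    funext k
    rw [InvDimAux.finrank_inv hn k]
  rw [hfun] at key
  exact key
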